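/- A finite partially ordered set x is covariant (i.e., admits a unique natural labeling up to isomorphism) if and only if any two elements a, b of x with different heights are comparable, where the height h(a) is the length (number of elements minus one) of a longest chain in x ending at a. -/

import Mathlib

variable {α : Type*} [PartialOrder α] [Fintype α]

/-- A labeling of a finite poset `α`: an order-preserving bijection onto `{1,…,|α|}`
(realized as `Fin (Fintype.card α)`). -/
def IsNaturalLabeling (ℓ : α ≃ Fin (Fintype.card α)) : Prop :=
  ∀ a b : α, a < b → ℓ a < ℓ b

/-- A finite poset is covariant if any two of its labelings are isomorphic: there is an
order automorphism carrying one labeling to the other. -/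
def IsCovariant (α : Type*) [PartialOrder α] [Fintype α] : Prop :=
  ∀ ℓ ℓ' : α ≃ Fin (Fintype.card α), IsNaturalLabeling ℓ → IsNaturalLabeling ℓ' →
    ∃ φ : α ≃o α, ∀ a : α, ℓ' (φ a) = ℓ a

lemma height_lt_top_of_fintype (x : α) : Order.height x < ⊤ := by
  have h : Order.height x ≤ (Fintype.card α : ℕ∞) :=
    Order.height_le fun p _ => by exact_mod_cast p.length_lt_card.le
  exact lt_of_le_of_lt h (ENat.coe_lt_top _)

lemma exists_labeling_iff {β : Type*} [LinearOrder β] [Fintype β] :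
    ∃ ℓ : β ≃ Fin (Fintype.card β), ∀ x y : β, x < y ↔ (ℓ x : ℕ) < (ℓ y : ℕ) := by
  set E := monoEquivOfFin β rfl with hE
  refine ⟨E.toEquiv.symm, fun x y => ?_⟩
  rw [← E.symm.lt_iff_lt]
  exact Fin.lt_def

lemma exists_adjacent_labeling {a b : α} (hab : ¬ a < b) (hba : ¬ b < a) (hne : a ≠ b) :
    ∃ ℓ : α ≃ Fin (Fintype.card α), IsNaturalLabeling ℓ ∧ ((ℓ b : ℕ) = (ℓ a : ℕ) + 1) := by
  classical
  set blk : α → ℕ := fun x =>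
    if x = a then 1 else if x = b then 2 else if x < a ∨ x < b then 0 else 3 with hblk
  have hblk_a : blk a = 1 := by simp [hblk]
  have hblk_b : blk b = 2 := by simp [hblk, Ne.symm hne]
  have hblkL : ∀ c, (c < a ∨ c < b) → c ≠ a → c ≠ b → blk c = 0 := by
    intro c h hca hcb; simp [hblk, hca, hcb, h]
  have hblkU : ∀ c, ¬(c < a ∨ c < b) → c ≠ a → c ≠ b → blk c = 3 := by
    intro c h hca hcb; simp [hblk, hca, hcb, h]
  have hblk1 : ∀ c, blk c = 1 → c = a := by
    intro c h
    by_contra hca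
    by_cases hcb : c = b
    · rw [hcb, hblk_b] at h; omega
    by_cases hL : c < a ∨ c < b
    · rw [hblkL c hL hca hcb] at h; omega
    · rw [hblkU c hL hca hcb] at h; omega
  have hblk2 : ∀ c, blk c = 2 → c = b := by
    intro c h
    by_contra hcb
    by_cases hca : c = a
    · rw [hca, hblk_a] at h; omega
    by_cases hL : c < a ∨ c < b
    · rw [hblkL c hL hca hcb] at h; omega
    · rw [hblkU c hL hca hcb] at h; omega
  have hmono : ∀ x y : α, x < y → blk x ≤ blk y := by
    intro x y hxy
    rcases eq_or_ne y a with hya | hya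
    · have hxa2 : x < a := hya ▸ hxy
      have hxna : x ≠ a := fun h => lt_irrefl a (h ▸ hxa2)
      have hxnb : x ≠ b := fun h => hba (h ▸ hxa2)
      have h0 := hblkL x (Or.inl hxa2) hxna hxnb
      have h1 : blk y = 1 := by rw [hya, hblk_a]
      omega
    rcases eq_or_ne y b with hyb | hyb
    · have hxb2 : x < b := hyb ▸ hxy
      have hxnb : x ≠ b := fun h => lt_irrefl b (h ▸ hxb2)
      have hxna : x ≠ a := fun h => hab (h ▸ hxb2)
      have h0 := hblkL x (Or.inr hxb2) hxna hxnb
      have h2 : blk y = 2 := by rw [hyb, hblk_b]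
      omega
    rcases eq_or_ne x a with hxa | hxa
    · have hay : a < y := hxa ▸ hxy
      have hU : ¬(y < a ∨ y < b) := by
        rintro (h | h); exacts [lt_asymm hay h, hab (hay.trans h)]
      have h3 := hblkU y hU hya hyb
      have h1 : blk x = 1 := by rw [hxa, hblk_a]
      omega
    rcases eq_or_ne x b with hxb | hxb
    · have hby : b < y := hxb ▸ hxy
      have hU : ¬(y < a ∨ y < b) := by
        rintro (h | h); exacts [hba (hby.trans h), lt_asymm hby h]
      have h3 := hblkU y hU hya hyb
      have h2 : blk x = 2 := by rw [hxb, hblk_b]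
      omega
    by_cases hxL : x < a ∨ x < b
    · rw [hblkL x hxL hxa hxb]; exact Nat.zero_le _
    · have hU : ¬(y < a ∨ y < b) := by
        rintro (h | h); exacts [hxL (Or.inl (hxy.trans h)), hxL (Or.inr (hxy.trans h))]
      rw [hblkU x hxL hxa hxb, hblkU y hU hya hyb]
  -- the lifted linear order
  set g : α → ℕ ×ₗ LinearExtension α := fun x => toLex (blk x, toLinearExtension x) with hg
  have hginj : Function.Injective g := by
    intro x y h
    have h2 : toLinearExtension x = toLinearExtension y := congrArg (fun p => (ofLex p).2) h
    exact h2
  have hgmono : ∀ x y : α, x < y → g x < g y := by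
    intro x y hxy
    rw [hg]
    rw [Prod.Lex.lt_iff]
    rcases lt_or_eq_of_le (hmono x y hxy) with h | h
    · exact Or.inl h
    · exact Or.inr ⟨h, lt_of_le_of_ne (toLinearExtension.monotone hxy.le) (fun h2 => hxy.ne h2)⟩
  have hgab : g a < g b := by
    rw [hg, Prod.Lex.lt_iff]
    left
    show blk a < blk b
    rw [hblk_a, hblk_b]
    omega
  letI L : LinearOrder α := LinearOrder.lift' g hginj
  have hglt : ∀ x y : α, L.lt x y ↔
      (blk x < blk y ∨ (blk x = blk y ∧ toLinearExtension x < toLinearExtension y)) := by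
    intro x y
    exact (Prod.Lex.lt_iff : g x < g y ↔ _)
  have hLlt : ∀ x y : α, L.lt x y ↔ g x < g y := fun _ _ => Iff.rfl
  obtain ⟨ℓ, hℓ⟩ := @exists_labeling_iff α L _
  have he1 : ∀ x y : α, L.lt x y → (ℓ x : ℕ) < (ℓ y : ℕ) := fun x y h => (hℓ x y).mp h
  have he2 : ∀ x y : α, (ℓ x : ℕ) < (ℓ y : ℕ) → L.lt x y := fun x y h => (hℓ x y).mpr h
  refine ⟨ℓ, ?_, ?_⟩
  · intro x y hxy
    have : (ℓ x : ℕ) < (ℓ y : ℕ) := he1 x y ((hLlt x y).mpr (hgmono x y hxy))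
    exact this
  · have hℓab : (ℓ a : ℕ) < (ℓ b : ℕ) := he1 a b ((hLlt a b).mpr hgab)
    have key : ∀ c : α, (ℓ a : ℕ) < (ℓ c : ℕ) → (ℓ b : ℕ) ≤ (ℓ c : ℕ) := by
      intro c h
      have h1 : L.lt a c := he2 a c h
      have h2 : blk a < blk c ∨ (blk a = blk c ∧ toLinearExtension a < toLinearExtension c) :=
        (hglt a c).mp h1
      have hc1 : blk c ≠ 1 := by
        intro h3
        rcases h2 with h2 | h2
        · rw [hblk_a, h3] at h2; omega
        · rw [hblk1 c h3] at h2; exact lt_irrefl _ h2.2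
      by_cases hc2 : blk c = 2
      · rw [hblk2 c hc2]
      · have hbc : blk b < blk c := by
          rw [hblk_b]
          rcases h2 with h2 | h2
          · rw [hblk_a] at h2; omega
          · rw [hblk_a] at h2; omega
        have h4 : L.lt b c := (hglt b c).mpr (Or.inl hbc)
        exact (he1 b c h4).le
    by_contra hcon
    have hlt : (ℓ a : ℕ) + 1 < (ℓ b : ℕ) := by omega
    set i : Fin (Fintype.card α) := ⟨(ℓ a : ℕ) + 1, lt_trans hlt (ℓ b).isLt⟩ with hi
    have h5 : (ℓ a : ℕ) < ((ℓ (ℓ.symm i)) : ℕ) := by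
      rw [Equiv.apply_symm_apply]
      simp [hi]
    have h6 := key (ℓ.symm i) h5
    rw [Equiv.apply_symm_apply] at h6
    simp only [hi] at h6
    omega

/-- A finite poset is covariant (its natural labeling is unique up to isomorphism) iff any
two elements of different heights are comparable, the height of `a` being the length of a
longest chain ending at `a`. -/
theorem stmt_0 :
    IsCovariant α ↔
      ∀ a b : α, Order.height a ≠ Order.height b → a < b ∨ b < a := by
  classical
  constructor
  · intro hcov a b hne
    by_contra hcomp
    push_neg at hcomp
    obtain ⟨hab, hba⟩ := hcomp
    have hne' : a ≠ b := by rintro rfl; exact hne rfl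
    obtain ⟨ℓ, hℓ, hadj⟩ := exists_adjacent_labeling hab hba hne'
    set s := Equiv.swap (ℓ a) (ℓ b) with hs
    set ℓ' := ℓ.trans s with hℓ'
    have hsa : s (ℓ a) = ℓ b := Equiv.swap_apply_left _ _
    have hsb : s (ℓ b) = ℓ a := Equiv.swap_apply_right _ _
    have hsc : ∀ c : α, c ≠ a → c ≠ b → s (ℓ c) = ℓ c := fun c h1 h2 =>
      Equiv.swap_apply_of_ne_of_ne (fun h => h1 (ℓ.injective h)) (fun h => h2 (ℓ.injective h))
    have hnat' : IsNaturalLabeling ℓ' := by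
      intro x y hxy
      have hval : (ℓ x : ℕ) < (ℓ y : ℕ) := hℓ x y hxy
      simp only [hℓ', Equiv.trans_apply]
      rw [Fin.lt_def]
      rcases eq_or_ne x a with rfl | hxa
      · have hy1 : y ≠ x := fun h => lt_irrefl y (h ▸ hxy)
        have hy2 : y ≠ b := fun h => hab (h ▸ hxy)
        have hv2 : (ℓ y : ℕ) ≠ (ℓ b : ℕ) := fun h => hy2 (ℓ.injective (Fin.val_injective h))
        rw [hsa, hsc y hy1 hy2]
        omega
      rcases eq_or_ne x b with rfl | hxb
      · have hy1 : y ≠ a := fun h => hba (h ▸ hxy)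
        have hy2 : y ≠ x := fun h => lt_irrefl y (h ▸ hxy)
        rw [hsb, hsc y hy1 hy2]
        omega
      rcases eq_or_ne y a with rfl | hya
      · rw [hsc x hxa hxb, hsa]
        omega
      rcases eq_or_ne y b with rfl | hyb
      · have hv2 : (ℓ x : ℕ) ≠ (ℓ a : ℕ) := fun h => hxa (ℓ.injective (Fin.val_injective h))
        rw [hsc x hxa hxb, hsb]
        omega
      · rw [hsc x hxa hxb, hsc y hya hyb]
        exact hval
    obtain ⟨φ, hφ⟩ := hcov ℓ ℓ' hℓ hnat'
    have h1 : ℓ' b = ℓ a := by rw [hℓ', Equiv.trans_apply, hsb]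
    have h2 : φ a = b := ℓ'.injective (by rw [hφ a, h1])
    exact hne ((Order.height_orderIso φ a).symm.trans (by rw [h2]))
  · intro H ℓ ℓ' hℓ hℓ'
    have hfin : ∀ x : α, Order.height x < ⊤ := height_lt_top_of_fintype
    have hstrict : ∀ x y : α, x < y → Order.height x < Order.height y :=
      fun x y h => Order.height_strictMono h (hfin x)
    have hlt_iff : ∀ x y : α, x < y ↔ Order.height x < Order.height y := by
      intro x y
      refine ⟨hstrict x y, fun h => ?_⟩
      rcases H x y (ne_of_lt h) with h2 | h2
      · exact h2
      · exact absurd (hstrict y x h2) (lt_asymm h)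
    have hmono : ∀ (m : α ≃ Fin (Fintype.card α)), IsNaturalLabeling m →
        ∀ i j : Fin (Fintype.card α), i ≤ j →
        Order.height (m.symm i) ≤ Order.height (m.symm j) := by
      intro m hm i j hij
      by_contra hc
      push_neg at hc
      have h1 := hm _ _ ((hlt_iff _ _).mpr hc)
      rw [Equiv.apply_symm_apply, Equiv.apply_symm_apply] at h1
      exact absurd hij (not_le.mpr h1)
    have hcount : ∀ (m : α ≃ Fin (Fintype.card α)), IsNaturalLabeling m →
        ∀ (i : Fin (Fintype.card α)) (v : ℕ∞),
        (Order.height (m.symm i) ≤ v ↔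
          (i : ℕ) < (Finset.univ.filter (fun x : α => Order.height x ≤ v)).card) := by
      intro m hm i v
      constructor
      · intro h
        have hsub : (Finset.Iic i).image (fun j => m.symm j) ⊆
            Finset.univ.filter (fun x => Order.height x ≤ v) := by
          intro x hx
          simp only [Finset.mem_image, Finset.mem_Iic] at hx
          obtain ⟨j, hj, rfl⟩ := hx
          simp only [Finset.mem_filter, Finset.mem_univ, true_and]
          exact le_trans (hmono m hm j i hj) h
        have hcard := Finset.card_le_card hsub
        rw [Finset.card_image_of_injective _ m.symm.injective, Fin.card_Iic] at hcard
        omega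
      · intro h
        by_contra hc
        push_neg at hc
        have hsub : Finset.univ.filter (fun x : α => Order.height x ≤ v) ⊆
            (Finset.Iio i).image (fun j => m.symm j) := by
          intro x hx
          simp only [Finset.mem_filter, Finset.mem_univ, true_and] at hx
          simp only [Finset.mem_image, Finset.mem_Iio]
          refine ⟨m x, ?_, m.symm_apply_apply x⟩
          by_contra hmx
          push_neg at hmx
          have h2 := hmono m hm i (m x) hmx
          rw [Equiv.symm_apply_apply] at h2
          exact absurd (le_trans h2 hx) (not_le.mpr hc)
        have hcard := Finset.card_le_card hsub
        have h3 := Finset.card_image_le (s := Finset.Iio i) (f := fun j => m.symm j)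
        rw [Fin.card_Iio] at h3
        omega
    have heq : ∀ i : Fin (Fintype.card α),
        Order.height (ℓ.symm i) = Order.height (ℓ'.symm i) := by
      intro i
      apply le_antisymm
      · exact (hcount ℓ hℓ i _).mpr ((hcount ℓ' hℓ' i _).mp le_rfl)
      · exact (hcount ℓ' hℓ' i _).mpr ((hcount ℓ hℓ i _).mp le_rfl)
    have hkey : ∀ x : α, Order.height (ℓ'.symm (ℓ x)) = Order.height x := by
      intro x
      have h := heq (ℓ x)
      rw [Equiv.symm_apply_apply] at h
      exact h.symm
    have hlt2 : ∀ u w : α, ℓ'.symm (ℓ u) < ℓ'.symm (ℓ w) ↔ u < w := by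
      intro u w
      rw [hlt_iff u w, hlt_iff (ℓ'.symm (ℓ u)) (ℓ'.symm (ℓ w)), hkey u, hkey w]
    refine ⟨⟨ℓ.trans ℓ'.symm, @fun u w => ?_⟩, fun a => ?_⟩
    · simp only [Equiv.trans_apply, Equiv.coe_fn_mk]
      rw [le_iff_lt_or_eq, le_iff_lt_or_eq, hlt2]
      have : ℓ'.symm (ℓ u) = ℓ'.symm (ℓ w) ↔ u = w := by
        rw [ℓ'.symm.apply_eq_iff_eq, ℓ.apply_eq_iff_eq]
      rw [this]
    · exact Equiv.apply_symm_apply ℓ' (ℓ a)
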